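/- For every d ≥ 1 and every M ∈ SL(d+1,ℝ), the set of values { F(M,t) : t ∈ (0,1) } is finite. -/

import Mathlib

open Matrix Set

/-- The point of the lattice `ℤ^{d+1} M` corresponding to the integer row vector `w`
(row vectors acting on the right). -/
noncomputable def latPoint {d : ℕ} (M : Matrix (Fin (d + 1)) (Fin (d + 1)) ℝ)
    (w : Fin (d + 1) → ℤ) : Fin (d + 1) → ℝ :=
  (fun i => (w i : ℝ)) ᵥ* M

/-- For a point `x = (u, v) ∈ ℝ^{d+1}`, `vpart x = v ∈ ℝ^d` is the vector of the last `d`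
coordinates (the first coordinate `x 0` being `u`). -/
def vpart {d : ℕ} (x : Fin (d + 1) → ℝ) : Fin d → ℝ := fun i => x i.succ

/-- The set `S(M, t) = { ‖v‖_∞ : (u, v) ∈ ℤ^{d+1} M, ‖v‖_∞ > 0, −t < u < 1 − t }`.
(The norm on `Fin d → ℝ` is the maximum norm.) -/
noncomputable def FSet (d : ℕ) (M : Matrix (Fin (d + 1)) (Fin (d + 1)) ℝ) (t : ℝ) :
    Set ℝ :=
  { r : ℝ | ∃ w : Fin (d + 1) → ℤ, r = ‖vpart (latPoint M w)‖ ∧ 0 < r ∧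
      -t < latPoint M w 0 ∧ latPoint M w 0 < 1 - t }

/-- `F(M, t) = min S(M, t)`. -/
noncomputable def Fval (d : ℕ) (M : Matrix (Fin (d + 1)) (Fin (d + 1)) ℝ) (t : ℝ) : ℝ :=
  sInf (FSet d M t)

namespace FvalAux

variable {d : ℕ} (M : Matrix (Fin (d + 1)) (Fin (d + 1)) ℝ)

/-- The real cast of an integer vector. -/
def castVec {d : ℕ} (w : Fin (d + 1) → ℤ) : Fin (d + 1) → ℝ := fun i => (w i : ℝ)

lemma latPoint_def (w : Fin (d + 1) → ℤ) : latPoint M w = castVec w ᵥ* M := rfl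

lemma castVec_add (w w' : Fin (d + 1) → ℤ) :
    castVec (w + w') = castVec w + castVec w' := by
  funext i; simp [castVec]

lemma castVec_neg (w : Fin (d + 1) → ℤ) : castVec (-w) = -castVec w := by
  funext i; simp [castVec]

lemma castVec_smul (k : ℤ) (w : Fin (d + 1) → ℤ) :
    castVec (k • w) = (k : ℝ) • castVec w := by
  funext i; simp [castVec]

lemma latPoint_add (w w' : Fin (d + 1) → ℤ) :
    latPoint M (w + w') = latPoint M w + latPoint M w' := by
  rw [latPoint_def, latPoint_def, latPoint_def, castVec_add, Matrix.add_vecMul]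

lemma latPoint_neg (w : Fin (d + 1) → ℤ) : latPoint M (-w) = -latPoint M w := by
  rw [latPoint_def, latPoint_def, castVec_neg, Matrix.neg_vecMul]

lemma latPoint_smul (k : ℤ) (w : Fin (d + 1) → ℤ) :
    latPoint M (k • w) = (k : ℝ) • latPoint M w := by
  rw [latPoint_def, latPoint_def, castVec_smul, Matrix.smul_vecMul]

lemma latPoint_eq_zero (hM : M.det = 1) {w : Fin (d + 1) → ℤ}
    (h : latPoint M w = 0) : w = 0 := by
  have hu : IsUnit M.det := by rw [hM]; exact isUnit_one
  have h2 : castVec w ᵥ* (M * M⁻¹) = (0 : Fin (d + 1) → ℝ) ᵥ* M⁻¹ := by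
    rw [← Matrix.vecMul_vecMul]
    exact congrArg (fun x => x ᵥ* M⁻¹) h
  rw [Matrix.mul_nonsing_inv M hu, Matrix.vecMul_one, Matrix.zero_vecMul] at h2
  funext i
  have := congrFun h2 i
  simp only [castVec, Pi.zero_apply] at this ⊢
  exact_mod_cast this

lemma latPoint_ne_zero (hM : M.det = 1) {w : Fin (d + 1) → ℤ} (h : w ≠ 0) :
    latPoint M w ≠ 0 := fun hc => h (latPoint_eq_zero M hM hc)

lemma latPoint_zero : latPoint M (0 : Fin (d + 1) → ℤ) = 0 := by
  have h : castVec (0 : Fin (d + 1) → ℤ) = 0 := by funext i; simp [castVec]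
  rw [latPoint_def, h, Matrix.zero_vecMul]

lemma vpart_add (x y : Fin (d + 1) → ℝ) : vpart (x + y) = vpart x + vpart y := rfl

lemma vpart_neg (x : Fin (d + 1) → ℝ) : vpart (-x) = -vpart x := rfl

lemma vpart_smul (c : ℝ) (x : Fin (d + 1) → ℝ) : vpart (c • x) = c • vpart x := rfl

lemma vpart_ne_zero {x : Fin (d + 1) → ℝ} (h0 : x 0 = 0) (hx : x ≠ 0) :
    vpart x ≠ 0 := by
  intro h
  apply hx
  funext i
  induction i using Fin.cases with
  | zero => simpa using h0
  | succ k => simpa [vpart] using congrFun h k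

/-- There is an integer vector whose lattice point has nonzero `v`-part. -/
lemma exists_vpart_ne_zero (hd : 1 ≤ d) (hM : M.det = 1) :
    ∃ w : Fin (d + 1) → ℤ, vpart (latPoint M w) ≠ 0 := by
  by_contra hc
  push_neg at hc
  have hcol : ∀ i, M i ((⟨0, hd⟩ : Fin d).succ) = 0 := by
    intro i
    have h1 : latPoint M (Pi.single i 1) ((⟨0, hd⟩ : Fin d).succ) = 0 :=
      congrFun (hc (Pi.single i 1)) ⟨0, hd⟩
    have h2 : latPoint M (Pi.single i 1) ((⟨0, hd⟩ : Fin d).succ)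
        = M i ((⟨0, hd⟩ : Fin d).succ) := by
      simp [latPoint, Matrix.vecMul, dotProduct, Pi.single_apply]
    rw [h2] at h1
    exact h1
  have : M.det = 0 := Matrix.det_eq_zero_of_column_eq_zero _ hcol
  rw [hM] at this
  exact one_ne_zero this

/-- Division-free statement of the ceiling trick: an arithmetic progression with positive
step `α` meets every interval `[a, a + α)`. -/
lemma exists_step {α : ℝ} (hα : 0 < α) (x a : ℝ) :
    ∃ k : ℤ, a ≤ x + k * α ∧ x + k * α < a + α := by
  refine ⟨⌈(a - x) / α⌉, ?_, ?_⟩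
  · have h1 : (a - x) / α ≤ (⌈(a - x) / α⌉ : ℝ) := Int.le_ceil _
    have h2 : a - x ≤ (⌈(a - x) / α⌉ : ℝ) * α := (div_le_iff₀ hα).mp h1
    linarith
  · have h2 : (⌈(a - x) / α⌉ : ℝ) < (a - x) / α + 1 := Int.ceil_lt_add_one _
    have h3 : (⌈(a - x) / α⌉ : ℝ) * α < ((a - x) / α + 1) * α :=
      mul_lt_mul_of_pos_right h2 hα
    have h4 : ((a - x) / α + 1) * α = a - x + α := by field_simp
    rw [h4] at h3
    linarith

/-- There is a nonzero lattice point whose first coordinate lies in `[0, 1/2)`. -/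
lemma exists_small (hd : 1 ≤ d) (hM : M.det = 1) :
    ∃ w : Fin (d + 1) → ℤ, latPoint M w ≠ 0 ∧ 0 ≤ latPoint M w 0 ∧
      latPoint M w 0 < 1 / 2 := by
  classical
  have hone : (1 : Fin (d + 1)) ≠ 0 := by
    intro h
    have h2 := congrArg Fin.val h
    have h3 : (0 : Fin (d + 1)).val = 0 := rfl
    have h4 : (1 : Fin (d + 1)).val = 1 % (d + 1) := rfl
    rw [h3, h4, Nat.mod_eq_of_lt (by omega : 1 < d + 1)] at h2
    omega
  set S : AddSubgroup ℝ :=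
    { carrier := { x | ∃ w : Fin (d + 1) → ℤ, latPoint M w 0 = x }
      zero_mem' := ⟨0, by rw [latPoint_zero]; rfl⟩
      add_mem' := by
        rintro x y ⟨w, hw⟩ ⟨w', hw'⟩
        exact ⟨w + w', by rw [latPoint_add]; simp [hw, hw']⟩
      neg_mem' := by
        rintro x ⟨w, hw⟩
        exact ⟨-w, by rw [latPoint_neg]; simp [hw]⟩ } with hS
  rcases AddSubgroup.dense_or_cyclic S with hdense | ⟨a, ha⟩
  · obtain ⟨x, hxS, hx⟩ := hdense.exists_between (by norm_num : (0 : ℝ) < 1 / 2)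
    obtain ⟨w, hw⟩ := hxS
    refine ⟨w, ?_, ?_, ?_⟩
    · intro hzero
      have hx0 : x = 0 := by rw [← hw, hzero]; rfl
      rw [hx0] at hx
      exact absurd hx.1 (lt_irrefl 0)
    · rw [hw]; exact le_of_lt hx.1
    · rw [hw]; exact hx.2
  · -- cyclic case: produce a nonzero kernel element
    have hmem : ∀ x ∈ S, ∃ n : ℤ, n • a = x := by
      intro x hx
      rw [ha] at hx
      exact (AddSubgroup.mem_closure_singleton).mp hx
    set u0 : ℝ := latPoint M (Pi.single 0 1) 0 with hu0
    set u1 : ℝ := latPoint M (Pi.single 1 1) 0 with hu1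
    obtain ⟨k0, hk0⟩ := hmem u0 ⟨Pi.single 0 1, rfl⟩
    obtain ⟨k1, hk1⟩ := hmem u1 ⟨Pi.single 1 1, rfl⟩
    by_cases h0 : k0 = 0
    · refine ⟨Pi.single 0 1, ?_, ?_, ?_⟩
      · apply latPoint_ne_zero M hM
        intro hc
        have := congrFun hc 0
        simp at this
      · have hzero : u0 = 0 := by rw [← hk0, h0]; simp
        rw [← hu0, hzero]
      · have hzero : u0 = 0 := by rw [← hk0, h0]; simp
        rw [← hu0, hzero]; norm_num
    · refine ⟨k0 • (Pi.single 1 1) - k1 • (Pi.single 0 1), ?_, ?_, ?_⟩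
      · apply latPoint_ne_zero M hM
        intro hc
        have := congrFun hc 1
        simp [Pi.single_apply, hone] at this
        exact h0 this
      all_goals {
        have hval : latPoint M (k0 • (Pi.single 1 1) - k1 • (Pi.single 0 1)) 0 = 0 := by
          have : k0 • (Pi.single 1 1) - k1 • (Pi.single 0 1)
              = k0 • (Pi.single 1 1 : Fin (d+1) → ℤ) + (-(k1 • (Pi.single 0 1)) : Fin (d+1) → ℤ) := by
            abel
          rw [this, latPoint_add, ← neg_smul, latPoint_smul, latPoint_smul]
          have e0 : u0 = (k0 : ℝ) * a := by rw [← hk0]; simp [zsmul_eq_mul]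
          have e1 : u1 = (k1 : ℝ) * a := by rw [← hk1]; simp [zsmul_eq_mul]
          simp only [Pi.add_apply, Pi.smul_apply, smul_eq_mul]
          rw [← hu0, ← hu1, e0, e1]
          push_cast
          ring
        rw [hval]
        try norm_num }

/-- Uniform bound: a single constant `C` such that for every `t ∈ (0,1)` the set
`FSet d M t` contains an element `≤ C`. -/
lemma exists_uniform_bound (hd : 1 ≤ d) (hM : M.det = 1) :
    ∃ C : ℝ, ∀ t : ℝ, 0 < t → t < 1 → ∃ r ∈ FSet d M t, r ≤ C := by
  obtain ⟨w1, hp1, hu1nonneg, hu1lt⟩ := exists_small M hd hM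
  by_cases h0 : latPoint M w1 0 = 0
  · -- the lattice point has first coordinate 0; it works for all t
    have hv : vpart (latPoint M w1) ≠ 0 := vpart_ne_zero h0 hp1
    refine ⟨‖vpart (latPoint M w1)‖, fun t ht ht1 => ⟨‖vpart (latPoint M w1)‖, ?_, le_refl _⟩⟩
    exact ⟨w1, rfl, norm_pos_iff.mpr hv, by rw [h0]; linarith, by rw [h0]; linarith⟩
  · have hu1pos : 0 < latPoint M w1 0 := lt_of_le_of_ne hu1nonneg (Ne.symm h0)
    by_cases hv1 : vpart (latPoint M w1) = 0
    · -- v-part vanishes: translate a point with nonzero v-part by multiples of w1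
      obtain ⟨w0, hw0⟩ := exists_vpart_ne_zero M hd hM
      refine ⟨‖vpart (latPoint M w0)‖, fun t ht ht1 => ?_⟩
      set α := latPoint M w1 0 with hα
      obtain ⟨k, hk1, hk2⟩ := exists_step hu1pos (latPoint M w0 0) (1/2 - t - α/2)
      refine ⟨‖vpart (latPoint M (w0 + k • w1))‖, ⟨w0 + k • w1, rfl, ?_, ?_, ?_⟩, ?_⟩
      · have : vpart (latPoint M (w0 + k • w1)) = vpart (latPoint M w0) := by
          rw [latPoint_add, latPoint_smul, vpart_add, vpart_smul, hv1]
          simp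
        rw [this]
        exact norm_pos_iff.mpr hw0
      · have : latPoint M (w0 + k • w1) 0 = latPoint M w0 0 + (k : ℝ) * α := by
          rw [latPoint_add, latPoint_smul]
          simp [hα, mul_comm]
        rw [this]; linarith
      · have : latPoint M (w0 + k • w1) 0 = latPoint M w0 0 + (k : ℝ) * α := by
          rw [latPoint_add, latPoint_smul]
          simp [hα, mul_comm]
        rw [this]; linarith
      · have : vpart (latPoint M (w0 + k • w1)) = vpart (latPoint M w0) := by
          rw [latPoint_add, latPoint_smul, vpart_add, vpart_smul, hv1]
          simp
        rw [this]
    · -- v-part nonzero: use ±w1 depending on t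
      refine ⟨‖vpart (latPoint M w1)‖, fun t ht ht1 => ?_⟩
      by_cases hthalf : t ≤ 1/2
      · exact ⟨‖vpart (latPoint M w1)‖,
          ⟨w1, rfl, norm_pos_iff.mpr hv1, by linarith, by linarith⟩, le_refl _⟩
      · refine ⟨‖vpart (latPoint M (-w1))‖, ⟨-w1, rfl, ?_, ?_, ?_⟩, ?_⟩
        · rw [latPoint_neg, vpart_neg]
          simpa using norm_pos_iff.mpr hv1
        · rw [latPoint_neg]; simp; linarith
        · rw [latPoint_neg]; simp; linarith
        · rw [latPoint_neg, vpart_neg, norm_neg]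

/-- Finiteness of the candidate values: norms of `v`-parts of lattice points that are
bounded in both coordinates form a finite set. -/
lemma finite_candidates (hM : M.det = 1) (B : ℝ) :
    { r : ℝ | ∃ w : Fin (d + 1) → ℤ, r = ‖vpart (latPoint M w)‖ ∧
        |latPoint M w 0| ≤ 1 ∧ r ≤ B }.Finite := by
  classical
  have hu : IsUnit M.det := by rw [hM]; exact isUnit_one
  set B' : ℝ := max 1 B with hB'
  set K : ℝ := B' * ∑ i, ∑ j, |M⁻¹ i j| with hK
  set N : ℤ := ⌈K⌉ with hN
  have hsub : { r : ℝ | ∃ w : Fin (d + 1) → ℤ, r = ‖vpart (latPoint M w)‖ ∧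
      |latPoint M w 0| ≤ 1 ∧ r ≤ B } ⊆
      (fun w : Fin (d + 1) → ℤ => ‖vpart (latPoint M w)‖) ''
        (Set.Icc (fun _ => -N) (fun _ => N)) := by
    rintro r ⟨w, hr, hub, hrB⟩
    refine ⟨w, ?_, hr.symm⟩
    -- bound on the lattice point coordinates
    have hlat : ∀ i, |latPoint M w i| ≤ B' := by
      intro i
      induction i using Fin.cases with
      | zero => exact le_trans hub (le_max_left _ _)
      | succ k =>
        have h1 : |latPoint M w k.succ| = ‖vpart (latPoint M w) k‖ := by
          simp [vpart, Real.norm_eq_abs]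
        have h2 : ‖vpart (latPoint M w) k‖ ≤ ‖vpart (latPoint M w)‖ :=
          norm_le_pi_norm _ k
        have h3 : ‖vpart (latPoint M w)‖ ≤ B := by rw [← hr]; exact hrB
        calc |latPoint M w k.succ| = ‖vpart (latPoint M w) k‖ := h1
          _ ≤ B := le_trans h2 h3
          _ ≤ B' := le_max_right _ _
    -- recover w from the lattice point
    have hrec : castVec w = latPoint M w ᵥ* M⁻¹ := by
      rw [latPoint_def, Matrix.vecMul_vecMul, Matrix.mul_nonsing_inv M hu,
        Matrix.vecMul_one]
    have hwj : ∀ j, |(w j : ℝ)| ≤ K := by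
      intro j
      have h1 : (w j : ℝ) = ∑ i, latPoint M w i * M⁻¹ i j := by
        have := congrFun hrec j
        simpa [castVec, Matrix.vecMul, dotProduct] using this
      rw [h1]
      calc |∑ i, latPoint M w i * M⁻¹ i j| ≤ ∑ i, |latPoint M w i * M⁻¹ i j| :=
            Finset.abs_sum_le_sum_abs _ _
        _ ≤ ∑ i, B' * |M⁻¹ i j| := by
            apply Finset.sum_le_sum
            intro i _
            rw [abs_mul]
            exact mul_le_mul_of_nonneg_right (hlat i) (abs_nonneg _)
        _ = B' * ∑ i, |M⁻¹ i j| := by rw [Finset.mul_sum]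
        _ ≤ B' * ∑ i, ∑ j', |M⁻¹ i j'| := by
            apply mul_le_mul_of_nonneg_left _ (le_trans zero_le_one (le_max_left 1 B))
            apply Finset.sum_le_sum
            intro i _
            apply Finset.single_le_sum (f := fun j' => |M⁻¹ i j'|)
              (fun j' _ => abs_nonneg _) (Finset.mem_univ j)
        _ = K := rfl
    rw [Set.mem_Icc]
    constructor <;> intro j
    · have := hwj j
      have hK' : (w j : ℝ) ≥ -K := by
        have := abs_le.mp (hwj j)
        linarith [this.1]
      have : ((-N : ℤ) : ℝ) ≤ (w j : ℝ) := by
        push_cast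
        have : K ≤ (N : ℝ) := Int.le_ceil K
        linarith
      exact_mod_cast this
    · have : (w j : ℝ) ≤ ((N : ℤ) : ℝ) := by
        have h1 := (abs_le.mp (hwj j)).2
        have : K ≤ (N : ℝ) := Int.le_ceil K
        linarith
      exact_mod_cast this
  exact Set.Finite.subset (Set.Finite.image _ (Set.finite_Icc _ _)) hsub

end FvalAux

open FvalAux in
/-- For every `d ≥ 1` and every `M ∈ SL(d+1, ℝ)`, the set of values `{F(M, t) : t ∈ (0, 1)}`
is finite. -/
theorem Fval_finite_range (d : ℕ) (hd : 1 ≤ d)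
    (M : Matrix (Fin (d + 1)) (Fin (d + 1)) ℝ) (hM : M.det = 1) :
    { r : ℝ | ∃ t : ℝ, 0 < t ∧ t < 1 ∧ r = Fval d M t }.Finite := by
  obtain ⟨C, hC⟩ := exists_uniform_bound M hd hM
  set V : Set ℝ := { r : ℝ | ∃ w : Fin (d + 1) → ℤ, r = ‖vpart (latPoint M w)‖ ∧
      |latPoint M w 0| ≤ 1 ∧ r ≤ C } with hV
  have hVfin : V.Finite := finite_candidates M hM C
  apply Set.Finite.subset hVfin
  rintro r ⟨t, ht0, ht1, hrt⟩
  obtain ⟨r0, hr0mem, hr0le⟩ := hC t ht0 ht1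
  set S := FSet d M t with hS
  have hbdd : BddBelow S := by
    refine ⟨0, ?_⟩
    rintro x ⟨w, hw, hx, _⟩
    exact le_of_lt hx
  set S' : Set ℝ := S ∩ Set.Iic C with hS'
  have hS'sub : S' ⊆ V := by
    rintro x ⟨⟨w, hw, hx, hl, hu⟩, hxC⟩
    refine ⟨w, hw, ?_, hxC⟩
    rw [abs_le]
    constructor <;> [linarith; linarith]
  have hS'fin : S'.Finite := hVfin.subset hS'sub
  have hS'ne : S'.Nonempty := ⟨r0, hr0mem, hr0le⟩
  have hinf : sInf S = sInf S' := by
    apply le_antisymm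
    · exact csInf_le_csInf hbdd hS'ne Set.inter_subset_left
    · apply le_csInf ⟨r0, hr0mem⟩
      intro b hb
      by_cases hbC : b ≤ C
      · exact csInf_le hS'fin.bddBelow ⟨hb, hbC⟩
      · calc sInf S' ≤ r0 := csInf_le hS'fin.bddBelow ⟨hr0mem, hr0le⟩
          _ ≤ C := hr0le
          _ ≤ b := le_of_not_ge hbC
  have : r ∈ S' := by
    rw [hrt]
    unfold Fval
    rw [← hS, hinf]
    exact hS'ne.csInf_mem hS'fin
  exact hS'sub this
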